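/- Let X and Y be isometrically homogeneous boundedly-finite metric spaces of asymptotic dimension zero (so all connected components C_ε(x) are finite). If φ : X → Y is a bi-uniform equivalence, then for every prime p and k ∈ ℕ: if p^k divides |C_ε(x)| for some ε < ∞ and x ∈ X, then p^k divides |C_δ(y)| for some δ < ∞ and y ∈ Y. In particular f_X = f_Y. -/

import Mathlib

/-- The `s`-connected component of `x`. -/
def chainComp {X : Type*} [MetricSpace X] (s : ℝ) (x : X) : Set X :=
  {y | Relation.ReflTransGen (fun a b => dist a b ≤ s) x y}

lemma mem_chainComp_self {X : Type*} [MetricSpace X] (s : ℝ) (x : X) :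
    x ∈ chainComp s x := Relation.ReflTransGen.refl

lemma chainComp_symm {X : Type*} [MetricSpace X] {s : ℝ} {x y : X}
    (h : y ∈ chainComp s x) : x ∈ chainComp s y := by
  have hs : Symmetric (fun a b : X => dist a b ≤ s) := fun a b hab => by
    show dist b a ≤ s
    rwa [dist_comm]
  exact (@Relation.ReflTransGen.symmetric _ _ ⟨fun a b hab => hs hab⟩).symm _ _ h

lemma chainComp_eq_of_mem {X : Type*} [MetricSpace X] {s : ℝ} {x y : X}
    (h : y ∈ chainComp s x) : chainComp s x = chainComp s y := by
  ext z
  constructor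
  · intro hz
    exact Relation.ReflTransGen.trans (chainComp_symm h) hz
  · intro hz
    exact Relation.ReflTransGen.trans h hz

lemma image_chainComp_subset {X Y : Type*} [MetricSpace X] [MetricSpace Y]
    {φ : X → Y} {ε δ : ℝ}
    (h : ∀ a b : X, dist a b ≤ ε → dist (φ a) (φ b) ≤ δ) (x : X) :
    φ '' chainComp ε x ⊆ chainComp δ (φ x) := by
  rintro _ ⟨z, hz, rfl⟩
  exact Relation.ReflTransGen.lift φ (fun a b hab => h a b hab) _ _ hz

lemma ncard_chainComp_isometry {X : Type*} [MetricSpace X] {f : X → X}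
    (hf : Function.Bijective f) (hiso : Isometry f) (s : ℝ) (x : X) :
    (chainComp s (f x)).ncard = (chainComp s x).ncard := by
  set e := Equiv.ofBijective f hf with he
  have hfe : ∀ a, f (e.symm a) = a := fun a => e.apply_symm_apply a
  have hg : Isometry (⇑e.symm) := Isometry.of_dist_eq (fun a b => by
    rw [← hiso.dist_eq (e.symm a) (e.symm b), hfe, hfe])
  have himg : f '' chainComp s x = chainComp s (f x) := by
    apply Set.Subset.antisymm
    · exact image_chainComp_subset
        (fun a b hab => by rw [hiso.dist_eq]; exact hab) x
    · intro y hy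
      have h1 : e.symm y ∈ chainComp s (e.symm (f x)) :=
        image_chainComp_subset (φ := ⇑e.symm)
          (fun a b hab => by rw [hg.dist_eq]; exact hab) (f x) ⟨y, hy, rfl⟩
      have h2 : e.symm (f x) = x := by
        apply hf.injective; rw [hfe]
      rw [h2] at h1
      exact ⟨e.symm y, h1, hfe y⟩
  rw [← himg, Set.ncard_image_of_injective _ hf.injective]

lemma dvd_ncard_of_partition {X : Type*} (S : Set X) (hS : S.Finite)
    (comp : X → Set X)
    (hmem : ∀ z, z ∈ comp z)
    (heq : ∀ z w, w ∈ comp z → comp z = comp w)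
    (hsub : ∀ z ∈ S, comp z ⊆ S)
    (n : ℕ) (hcard : ∀ z ∈ S, (comp z).ncard = n) :
    n ∣ S.ncard := by
  classical
  set F := hS.toFinset with hF
  have hFS : ∀ z, z ∈ F ↔ z ∈ S := fun z => hS.mem_toFinset
  set C : Finset (Set X) := F.image comp with hC
  have hcount : F.card = ∑ c ∈ C, (F.filter (fun z => comp z = c)).card :=
    Finset.card_eq_sum_card_fiberwise (fun z hz => Finset.mem_image_of_mem _ hz)
  have hterm : ∀ c ∈ C, (F.filter (fun z => comp z = c)).card = n := by
    intro c hc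
    obtain ⟨z₀, hz₀F, rfl⟩ := Finset.mem_image.mp hc
    have hz₀S : z₀ ∈ S := (hFS z₀).mp hz₀F
    have hcfin : (comp z₀).Finite := hS.subset (hsub z₀ hz₀S)
    have hfe : F.filter (fun z => comp z = comp z₀) = hcfin.toFinset := by
      ext z
      simp only [Finset.mem_filter, hFS, Set.Finite.mem_toFinset]
      constructor
      · rintro ⟨hzS, hzc⟩
        rw [← hzc]; exact hmem z
      · intro hz
        refine ⟨hsub z₀ hz₀S hz, ?_⟩
        exact (heq z₀ z hz).symm
    rw [hfe, ← Set.ncard_eq_toFinset_card _ hcfin]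
    exact hcard z₀ hz₀S
  rw [Set.ncard_eq_toFinset_card _ hS, ← hF, hcount, Finset.sum_congr rfl hterm,
    Finset.sum_const, smul_eq_mul]
  exact Dvd.intro_left _ rfl

/-- The key one-directional lemma: divisibility of component cardinalities
transfers along a macro-uniform bijection. -/
lemma key_transfer {X Y : Type*} [MetricSpace X] [MetricSpace Y]
    (hbfY : ∀ B : Set Y, Bornology.IsBounded B → B.Finite)
    (hdimY : ∀ ε : ℝ, ∃ m : ℝ, ∀ x y : Y, y ∈ chainComp ε x → dist x y ≤ m)
    (hhomX : ∀ x y : X, ∃ f : X → X, Function.Bijective f ∧ Isometry f ∧ f x = y)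
    (φ : X → Y) (hbij : Function.Bijective φ)
    (hmacro : ∀ δ : ℝ, ∃ ε : ℝ, ∀ a b : X, dist a b ≤ δ → dist (φ a) (φ b) ≤ ε)
    (p k : ℕ) :
    (∃ (ε : ℝ) (x : X), p ^ k ∣ (chainComp ε x).ncard) →
      ∃ (δ : ℝ) (y : Y), p ^ k ∣ (chainComp δ y).ncard := by
  rintro ⟨ε, x, hdvd⟩
  obtain ⟨δ, hδ⟩ := hmacro ε
  set D := chainComp δ (φ x) with hD
  obtain ⟨m, hm⟩ := hdimY δ
  have hDfin : D.Finite := by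
    apply hbfY
    apply Metric.isBounded_closedBall (x := φ x) (r := m) |>.subset
    intro y hy
    rw [Metric.mem_closedBall, dist_comm]
    exact hm (φ x) y hy
  set S := φ ⁻¹' D with hS
  have hSfin : S.Finite :=
    Set.Finite.preimage (hbij.injective.injOn) hDfin
  have hsub : ∀ z ∈ S, chainComp ε z ⊆ S := by
    intro z hz w hw
    have h1 : φ w ∈ chainComp δ (φ z) :=
      image_chainComp_subset hδ z ⟨w, hw, rfl⟩
    have h2 : D = chainComp δ (φ z) := chainComp_eq_of_mem hz
    show φ w ∈ D
    rw [h2]; exact h1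
  have hcard : ∀ z ∈ S, (chainComp ε z).ncard = (chainComp ε x).ncard := by
    intro z _
    obtain ⟨f, hfb, hfi, hfx⟩ := hhomX x z
    rw [← hfx]
    exact ncard_chainComp_isometry hfb hfi ε x
  have hn : (chainComp ε x).ncard ∣ S.ncard :=
    dvd_ncard_of_partition S hSfin (chainComp ε)
      (fun z => mem_chainComp_self ε z)
      (fun z w hw => chainComp_eq_of_mem hw)
      hsub _ hcard
  have hSD : S.ncard = D.ncard := by
    have h1 : φ '' S = D := Set.image_preimage_eq D hbij.surjective
    rw [← h1, Set.ncard_image_of_injective _ hbij.injective]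
  refine ⟨δ, φ x, dvd_trans hdvd ?_⟩
  rw [← hSD]; exact hn

/-- Let `X`, `Y` be isometrically homogeneous, boundedly-finite metric spaces of
asymptotic dimension zero (so all connected components are finite), and let
`φ : X → Y` be a bi-uniform equivalence. Then for every prime `p` and `k ∈ ℕ`:
if `p^k` divides `|C_ε(x)|` for some `ε < ∞` and `x ∈ X`, then `p^k` divides
`|C_δ(y)|` for some `δ < ∞` and `y ∈ Y`. In particular `f_X = f_Y`. -/
theorem biUniformEquiv_divisibility {X Y : Type*} [MetricSpace X] [MetricSpace Y]
    (hbfX : ∀ B : Set X, Bornology.IsBounded B → B.Finite)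
    (hbfY : ∀ B : Set Y, Bornology.IsBounded B → B.Finite)
    (hdimX : ∀ ε : ℝ, ∃ m : ℝ, ∀ x y : X, y ∈ chainComp ε x → dist x y ≤ m)
    (hdimY : ∀ ε : ℝ, ∃ m : ℝ, ∀ x y : Y, y ∈ chainComp ε x → dist x y ≤ m)
    (hhomX : ∀ x y : X, ∃ f : X → X, Function.Bijective f ∧ Isometry f ∧ f x = y)
    (hhomY : ∀ x y : Y, ∃ f : Y → Y, Function.Bijective f ∧ Isometry f ∧ f x = y)
    (φ : X → Y) (hbij : Function.Bijective φ)
    (hmicro : ∀ ε : ℝ, 0 < ε → ∃ δ : ℝ, 0 < δ ∧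
      ∀ a b : X, dist a b ≤ δ → dist (φ a) (φ b) ≤ ε)
    (hmacro : ∀ δ : ℝ, ∃ ε : ℝ, ∀ a b : X, dist a b ≤ δ → dist (φ a) (φ b) ≤ ε)
    (hmicroInv : ∀ ε : ℝ, 0 < ε → ∃ δ : ℝ, 0 < δ ∧
      ∀ a b : X, dist (φ a) (φ b) ≤ δ → dist a b ≤ ε)
    (hmacroInv : ∀ δ : ℝ, ∃ ε : ℝ, ∀ a b : X, dist (φ a) (φ b) ≤ δ → dist a b ≤ ε)
    (p : ℕ) (hp : p.Prime) (k : ℕ) :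
    ((∃ (ε : ℝ) (x : X), p ^ k ∣ (chainComp ε x).ncard) →
      ∃ (δ : ℝ) (y : Y), p ^ k ∣ (chainComp δ y).ncard) ∧
    {n : ℕ | ∃ (ε : ℝ) (x : X), p ^ n ∣ (chainComp ε x).ncard} =
      {n : ℕ | ∃ (δ : ℝ) (y : Y), p ^ n ∣ (chainComp δ y).ncard} := by
  -- inverse map
  set e := Equiv.ofBijective φ hbij with he
  have hfe : ∀ a, φ (e.symm a) = a := fun a => e.apply_symm_apply a
  have hmacroInv' : ∀ δ : ℝ, ∃ ε : ℝ,
      ∀ a b : Y, dist a b ≤ δ → dist (e.symm a) (e.symm b) ≤ ε := by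
    intro δ
    obtain ⟨ε, h⟩ := hmacroInv δ
    exact ⟨ε, fun a b hab => h (e.symm a) (e.symm b) (by rw [hfe, hfe]; exact hab)⟩
  have fwd : ∀ n : ℕ, (∃ (ε : ℝ) (x : X), p ^ n ∣ (chainComp ε x).ncard) →
      ∃ (δ : ℝ) (y : Y), p ^ n ∣ (chainComp δ y).ncard :=
    fun n => key_transfer hbfY hdimY hhomX φ hbij hmacro p n
  have bwd : ∀ n : ℕ, (∃ (δ : ℝ) (y : Y), p ^ n ∣ (chainComp δ y).ncard) →
      ∃ (ε : ℝ) (x : X), p ^ n ∣ (chainComp ε x).ncard :=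
    fun n => key_transfer hbfX hdimX hhomY (⇑e.symm) e.symm.bijective hmacroInv' p n
  refine ⟨fwd k, ?_⟩
  ext n
  exact ⟨fun h => fwd n h, fun h => bwd n h⟩
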